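/- Adding a single box in position (i,j) to the component λ_k of the n-quotient of λ̄ corresponds to adding a border strip of length n to λ̄; this border strip contains exactly one box of each color (where box (r,s) of λ̄ has color s - r mod n), its northeastern-most box has color k, and its unique box of color 0 lies on the diagonal s - r = n(j - i). -/

import Mathlib

/-- A partition: a non-increasing, eventually-zero sequence of non-negative integers. -/
structure Ptn where
  f : ℕ → ℕ
  anti : ∀ i, f (i + 1) ≤ f i
  ev : ∃ N, ∀ i, N ≤ i → f i = 0

/-- The size `|ρ|` of a partition: the number of boxes. -/
noncomputable def Ptn.size (ρ : Ptn) : ℕ := ∑ᶠ i, ρ.f i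

/-- The set `S(ρ) = {ρ_i - (i+1) : i ≥ 0} ⊆ ℤ`. -/
def Ptn.S (ρ : Ptn) : Set ℤ := {t | ∃ i : ℕ, t = (ρ.f i : ℤ) - (i + 1)}

/-- The conjugate partition: `ρ'_j = #{i : ρ_i > j}`. -/
noncomputable def Ptn.conj (ρ : Ptn) (j : ℕ) : ℕ := Set.ncard {i : ℕ | j < ρ.f i}

/-- The interlacing relation `τ ≻ σ`: `τ_0 ≥ σ_0 ≥ τ_1 ≥ σ_1 ≥ ...`. -/
def Interlace (τ σ : Ptn) : Prop := ∀ i, σ.f i ≤ τ.f i ∧ τ.f (i + 1) ≤ σ.f i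

/-- The set of boxes of a partition (row, column), 0-indexed. -/
def Ptn.cells (ρ : Ptn) : Set (ℕ × ℕ) := {p | p.2 < ρ.f p.1}

/-- The interlaced-slope-sequence condition: `Λ̄(t) = λ_{t mod n}((t - t mod n)/n)`,
i.e. `(λ_0, ..., λ_{n-1})` is the `n`-quotient of `Λ`. -/
def SlopeQuot (n : ℕ) (lam : ℕ → Ptn) (Λ : Ptn) : Prop :=
  ∀ t : ℤ, t ∈ Λ.S ↔ t.ediv n ∈ (lam (t.emod n).toNat).S

/-- The number of boxes of `Λ` of color `c`, where box `(i,j)` has color `(j - i) mod n`. -/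
noncomputable def colorCount (n : ℕ) (Λ : Ptn) (c : ℤ) : ℕ :=
  ∑ᶠ i : ℕ, ((Finset.range (Λ.f i)).filter (fun j : ℕ => ((j : ℤ) - (i : ℤ)).emod n = c)).card

/-- `Λ` is balanced: it has the same number of boxes of each color mod `n`. -/
def BalancedPtn (n : ℕ) (Λ : Ptn) : Prop :=
  ∀ c c' : ℤ, colorCount n Λ c = colorCount n Λ c'

/-- Two boxes are adjacent if they share an edge. -/
def Adj (a b : ℕ × ℕ) : Prop :=
  (a.1 = b.1 ∧ (a.2 + 1 = b.2 ∨ b.2 + 1 = a.2)) ∨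
  (a.2 = b.2 ∧ (a.1 + 1 = b.1 ∨ b.1 + 1 = a.1))

/-- A set of boxes is connected (via edge-adjacency, through the set). -/
def ConnectedBoxes (D : Set (ℕ × ℕ)) : Prop :=
  ∀ a ∈ D, ∀ b ∈ D, Relation.ReflTransGen (fun x y => y ∈ D ∧ Adj x y) a b

/-- A set of boxes contains no 2×2 square. -/
def No2x2 (D : Set (ℕ × ℕ)) : Prop :=
  ¬ ∃ r s : ℕ, (r, s) ∈ D ∧ (r + 1, s) ∈ D ∧ (r, s + 1) ∈ D ∧ (r + 1, s + 1) ∈ D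

/-- A border strip with `n` boxes: a finite connected set of `n` boxes with no 2×2 square. -/
def IsBorderStrip (n : ℕ) (D : Set (ℕ × ℕ)) : Prop :=
  D.Finite ∧ D.ncard = n ∧ ConnectedBoxes D ∧ No2x2 D

/-- The height of a strip: the number of rows it occupies, minus one. -/
noncomputable def htS (D : Set (ℕ × ℕ)) : ℕ := Set.ncard {r | ∃ s, (r, s) ∈ D} - 1

-- AUX START
def bsBeta (ρ : Ptn) (r : ℕ) : ℤ := (ρ.f r : ℤ) - (r + 1)

lemma bsF_antitone (ρ : Ptn) : Antitone ρ.f := antitone_nat_of_succ_le ρ.anti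

lemma bsBeta_strictAnti (ρ : Ptn) : StrictAnti (bsBeta ρ) := by
  apply strictAnti_nat_of_succ_lt
  intro r
  have := ρ.anti r
  simp only [bsBeta]
  push_cast
  omega

lemma bsMem_S_iff (ρ : Ptn) (t : ℤ) : t ∈ ρ.S ↔ ∃ r : ℕ, t = bsBeta ρ r := Iff.rfl

def bsA (ρ : Ptn) (x : ℤ) : Set ℕ := {r | x ≤ bsBeta ρ r}

lemma bsA_finite (ρ : Ptn) (x : ℤ) : (bsA ρ x).Finite := by
  apply Set.Finite.subset (Set.finite_Iio ((ρ.f 0 : ℤ) - x + 1).toNat)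
  intro r hr
  simp only [bsA, Set.mem_setOf_eq, bsBeta] at hr
  have h0 : ρ.f r ≤ ρ.f 0 := bsF_antitone ρ (Nat.zero_le r)
  simp only [Set.mem_Iio]
  omega

noncomputable def bsNv (ρ : Ptn) (x : ℤ) : ℕ := (bsA ρ x).ncard

lemma bsMem_iff_lt_ncard {A : Set ℕ} (hfin : A.Finite)
    (hdc : ∀ a ∈ A, ∀ b, b ≤ a → b ∈ A) (r : ℕ) : r ∈ A ↔ r < A.ncard := by
  rcases A.eq_empty_or_nonempty with h | h
  · simp [h]
  · have hF : hfin.toFinset.Nonempty := by simpa using h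
    set M := hfin.toFinset.max' hF with hM
    have hAeq : A = Set.Iio (M + 1) := by
      ext b
      simp only [Set.mem_Iio]
      constructor
      · intro hb
        have := hfin.toFinset.le_max' b (by simpa using hb)
        omega
      · intro hb
        exact hdc M (by simpa using hfin.toFinset.max'_mem hF) b (by omega)
    rw [hAeq, ← Finset.coe_range, Set.ncard_coe_finset, Finset.card_range]
    simp

lemma bsMem_A_iff (ρ : Ptn) (x : ℤ) (r : ℕ) : r ∈ bsA ρ x ↔ r < bsNv ρ x :=
  bsMem_iff_lt_ncard (bsA_finite ρ x)
    (fun a ha b hb => le_trans ha ((bsBeta_strictAnti ρ).antitone hb)) r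

lemma bsCell_iff (ρ : Ptn) (p : ℕ × ℕ) :
    p ∈ ρ.cells ↔ p.1 < bsNv ρ ((p.2 : ℤ) - p.1) := by
  rw [← bsMem_A_iff]
  simp only [Ptn.cells, Set.mem_setOf_eq, bsA, bsBeta]
  omega

lemma bsT_eq_image (ρ : Ptn) (x : ℤ) : {t ∈ ρ.S | x ≤ t} = bsBeta ρ '' bsA ρ x := by
  ext t
  simp only [Set.mem_setOf_eq, Set.mem_image, bsMem_S_iff, bsA]
  constructor
  · rintro ⟨⟨r, rfl⟩, hx⟩
    exact ⟨r, hx, rfl⟩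
  · rintro ⟨r, hx, rfl⟩
    exact ⟨⟨r, rfl⟩, hx⟩

lemma bsNcard_T (ρ : Ptn) (x : ℤ) : {t ∈ ρ.S | x ≤ t}.ncard = bsNv ρ x := by
  rw [bsT_eq_image, Set.ncard_image_of_injective _ (bsBeta_strictAnti ρ).injective]
  rfl

lemma bsT_finite (ρ : Ptn) (x : ℤ) : {t ∈ ρ.S | x ≤ t}.Finite := by
  rw [bsT_eq_image]
  exact (bsA_finite ρ x).image _

lemma bsLe_d_add_Nv (Λ : Ptn) (d : ℤ) : 0 ≤ d + bsNv Λ d := by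
  by_cases hd : 0 ≤ d
  · have : (0:ℤ) ≤ (bsNv Λ d : ℤ) := Int.natCast_nonneg _
    omega
  · have hsub : ↑(Finset.range (-d).toNat) ⊆ bsA Λ d := by
      intro r hr
      simp only [Finset.coe_range, Set.mem_Iio] at hr
      simp only [bsA, Set.mem_setOf_eq, bsBeta]
      omega
    have := Set.ncard_le_ncard hsub (bsA_finite Λ d)
    rw [Set.ncard_coe_finset, Finset.card_range] at this
    have : (-d).toNat ≤ bsNv Λ d := this
    omega

noncomputable def bsBx (Λ : Ptn) (d : ℤ) : ℕ × ℕ := (bsNv Λ d, (d + bsNv Λ d).toNat)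

lemma bsBx_diag (Λ : Ptn) (d : ℤ) : ((bsBx Λ d).2 : ℤ) - (bsBx Λ d).1 = d := by
  have := bsLe_d_add_Nv Λ d
  simp only [bsBx]
  omega

lemma bsNv_antitone (Λ : Ptn) : Antitone (bsNv Λ) := fun x y hxy =>
  Set.ncard_le_ncard (fun r hr => le_trans hxy hr) (bsA_finite Λ x)

lemma bsNv_succ_ge (Λ : Ptn) (d : ℤ) : bsNv Λ d ≤ bsNv Λ (d + 1) + 1 := by
  by_cases h : ∃ r, bsBeta Λ r = d
  · obtain ⟨r₀, hr₀⟩ := h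
    have hsub : bsA Λ d ⊆ insert r₀ (bsA Λ (d + 1)) := by
      intro r hr
      have hr' : d ≤ bsBeta Λ r := hr
      rcases eq_or_lt_of_le hr' with he | hl
      · exact Set.mem_insert_iff.mpr
          (Or.inl ((bsBeta_strictAnti Λ).injective (hr₀.trans he)).symm)
      · exact Set.mem_insert_iff.mpr (Or.inr (by exact hl))
    calc bsNv Λ d ≤ (insert r₀ (bsA Λ (d + 1))).ncard :=
          Set.ncard_le_ncard hsub ((bsA_finite Λ (d + 1)).insert r₀)
      _ ≤ bsNv Λ (d + 1) + 1 := Set.ncard_insert_le r₀ _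
  · have hsub : bsA Λ d ⊆ bsA Λ (d + 1) := by
      intro r hr
      have hr' : d ≤ bsBeta Λ r := hr
      rcases eq_or_lt_of_le hr' with he | hl
      · exact absurd ⟨r, he.symm⟩ h
      · exact hl
    exact Nat.le_succ_of_le (Set.ncard_le_ncard hsub (bsA_finite Λ (d + 1)))

lemma bsG_mono (Λ : Ptn) {d e : ℤ} (h : d ≤ e) :
    d + bsNv Λ d ≤ e + bsNv Λ e := by
  refine Int.le_induction (motive := fun e _ => d + (bsNv Λ d : ℤ) ≤ e + bsNv Λ e) ?_ ?_ e h
  · exact le_refl _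
  · intro m _ ih
    have h1 := bsNv_succ_ge Λ m
    have h2 : (bsNv Λ m : ℤ) ≤ (bsNv Λ (m+1) : ℤ) + 1 := by exact_mod_cast h1
    omega

lemma bsAdj_bx (Λ : Ptn) (d : ℤ) : Adj (bsBx Λ d) (bsBx Λ (d + 1)) := by
  have h1 : bsNv Λ (d + 1) ≤ bsNv Λ d := bsNv_antitone Λ (by omega)
  have h2 : bsNv Λ d ≤ bsNv Λ (d + 1) + 1 := bsNv_succ_ge Λ d
  have h3 := bsLe_d_add_Nv Λ d
  have h4 := bsLe_d_add_Nv Λ (d + 1)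
  rcases eq_or_lt_of_le h1 with he | hl
  · left
    exact ⟨by simp [bsBx, he], Or.inl (by simp only [bsBx]; omega)⟩
  · right
    exact ⟨by simp only [bsBx]; omega, Or.inr (by simp only [bsBx]; omega)⟩

lemma bsAdj_symm {x y : ℕ × ℕ} (h : Adj x y) : Adj y x := by
  unfold Adj at *
  tauto


section BSStrip

variable {Λ Λ' : Ptn} {a : ℤ} {n : ℕ}

lemma bsNv'_eq (hn : 0 < n) (ha : a ∈ Λ.S) (han : a + n ∉ Λ.S)
    (key : ∀ t : ℤ, t ∈ Λ'.S ↔ (t ∈ Λ.S ∧ t ≠ a) ∨ t = a + n) (x : ℤ) :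
    bsNv Λ' x = bsNv Λ x + (if a < x ∧ x ≤ a + n then 1 else 0) := by
  rw [← bsNcard_T, ← bsNcard_T]
  have hnn : (0:ℤ) ≤ (n:ℤ) := Int.natCast_nonneg n
  by_cases h1 : x ≤ a
  · rw [if_neg (by omega)]
    have hset : {t ∈ Λ'.S | x ≤ t} = insert (a + n) ({t ∈ Λ.S | x ≤ t} \ {a}) := by
      ext t
      simp only [Set.mem_setOf_eq, Set.mem_insert_iff, Set.mem_diff, Set.mem_singleton_iff, key t]
      constructor
      · rintro ⟨h | h, hx⟩
        · exact Or.inr ⟨⟨h.1, hx⟩, h.2⟩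
        · exact Or.inl h
      · rintro (rfl | ⟨⟨hS, hx⟩, hne⟩)
        · exact ⟨Or.inr rfl, by omega⟩
        · exact ⟨Or.inl ⟨hS, hne⟩, hx⟩
    rw [hset, Set.ncard_insert_of_notMem (fun hc => han hc.1.1) ((bsT_finite Λ x).diff (t := {a})),
      Set.ncard_diff_singleton_add_one (show a ∈ {t ∈ Λ.S | x ≤ t} from ⟨ha, h1⟩) (bsT_finite Λ x), add_zero]
  · by_cases h2 : x ≤ a + n
    · rw [if_pos ⟨by omega, h2⟩]
      have hset : {t ∈ Λ'.S | x ≤ t} = insert (a + n) {t ∈ Λ.S | x ≤ t} := by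
        ext t
        simp only [Set.mem_setOf_eq, Set.mem_insert_iff, key t]
        constructor
        · rintro ⟨h | h, hx⟩
          · exact Or.inr ⟨h.1, hx⟩
          · exact Or.inl h
        · rintro (rfl | ⟨hS, hx⟩)
          · exact ⟨Or.inr rfl, h2⟩
          · exact ⟨Or.inl ⟨hS, by omega⟩, hx⟩
      rw [hset, Set.ncard_insert_of_notMem (fun hc => han hc.1) (bsT_finite Λ x)]
    · rw [if_neg (by omega), add_zero]
      congr 1
      ext t
      simp only [Set.mem_setOf_eq, key t]
      constructor
      · rintro ⟨h | rfl, hx⟩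
        · exact ⟨h.1, hx⟩
        · exact absurd hx (by omega)
      · rintro ⟨hS, hx⟩
        exact ⟨Or.inl ⟨hS, by omega⟩, hx⟩

lemma bsMem_diff_iff (hn : 0 < n) (ha : a ∈ Λ.S) (han : a + n ∉ Λ.S)
    (key : ∀ t : ℤ, t ∈ Λ'.S ↔ (t ∈ Λ.S ∧ t ≠ a) ∨ t = a + n) (x : ℕ × ℕ) :
    x ∈ Λ'.cells \ Λ.cells ↔
      (a < (x.2:ℤ) - x.1 ∧ (x.2:ℤ) - x.1 ≤ a + n ∧ bsNv Λ ((x.2:ℤ) - x.1) = x.1) := by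
  rw [Set.mem_diff, bsCell_iff, bsCell_iff, bsNv'_eq hn ha han key]
  split_ifs with h <;> omega

lemma bsMem_diff_iff_bx (hn : 0 < n) (ha : a ∈ Λ.S) (han : a + n ∉ Λ.S)
    (key : ∀ t : ℤ, t ∈ Λ'.S ↔ (t ∈ Λ.S ∧ t ≠ a) ∨ t = a + n) (x : ℕ × ℕ) :
    x ∈ Λ'.cells \ Λ.cells ↔ ∃ d : ℤ, a < d ∧ d ≤ a + n ∧ x = bsBx Λ d := by
  rw [bsMem_diff_iff hn ha han key]
  constructor
  · rintro ⟨h1, h2, h3⟩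
    refine ⟨(x.2:ℤ) - x.1, h1, h2, ?_⟩
    have h4 := bsLe_d_add_Nv Λ ((x.2:ℤ) - x.1)
    rw [Prod.ext_iff]
    refine ⟨h3.symm, ?_⟩
    simp only [bsBx, h3]
    omega
  · rintro ⟨d, h1, h2, rfl⟩
    rw [bsBx_diag]
    exact ⟨h1, h2, rfl⟩

lemma bsConnected (hn : 0 < n) (ha : a ∈ Λ.S) (han : a + n ∉ Λ.S)
    (key : ∀ t : ℤ, t ∈ Λ'.S ↔ (t ∈ Λ.S ∧ t ≠ a) ∨ t = a + n) :
    ConnectedBoxes (Λ'.cells \ Λ.cells) := by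
  have hmem : ∀ d : ℤ, a < d → d ≤ a + n → bsBx Λ d ∈ Λ'.cells \ Λ.cells := fun d h1 h2 =>
    (bsMem_diff_iff_bx hn ha han key _).mpr ⟨d, h1, h2, rfl⟩
  have chain_up : ∀ d : ℤ, a < d → ∀ e : ℤ, d ≤ e → e ≤ a + n →
      Relation.ReflTransGen (fun x y => y ∈ Λ'.cells \ Λ.cells ∧ Adj x y)
        (bsBx Λ d) (bsBx Λ e) := by
    intro d hd e hde
    refine Int.le_induction
      (motive := fun e _ => e ≤ a + n → Relation.ReflTransGen
        (fun x y => y ∈ Λ'.cells \ Λ.cells ∧ Adj x y) (bsBx Λ d) (bsBx Λ e)) ?_ ?_ e hde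
    · intro _
      exact Relation.ReflTransGen.refl
    · intro m hm ih hm1
      exact (ih (by omega)).tail ⟨hmem (m+1) (by omega) hm1, bsAdj_bx Λ m⟩
  have chain_down : ∀ d : ℤ, a < d → ∀ e : ℤ, d ≤ e → e ≤ a + n →
      Relation.ReflTransGen (fun x y => y ∈ Λ'.cells \ Λ.cells ∧ Adj x y)
        (bsBx Λ e) (bsBx Λ d) := by
    intro d hd e hde
    refine Int.le_induction
      (motive := fun e _ => e ≤ a + n → Relation.ReflTransGen
        (fun x y => y ∈ Λ'.cells \ Λ.cells ∧ Adj x y) (bsBx Λ e) (bsBx Λ d)) ?_ ?_ e hde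
    · intro _
      exact Relation.ReflTransGen.refl
    · intro m hm ih hm1
      exact Relation.ReflTransGen.head
        ⟨hmem m (by omega) (by omega), bsAdj_symm (bsAdj_bx Λ m)⟩ (ih (by omega))
  intro p hp q hq
  obtain ⟨d, hd1, hd2, rfl⟩ := (bsMem_diff_iff_bx hn ha han key p).mp hp
  obtain ⟨e, he1, he2, rfl⟩ := (bsMem_diff_iff_bx hn ha han key q).mp hq
  rcases le_total d e with h | h
  · exact chain_up d hd1 e h he2
  · exact chain_down e he1 d h hd2

lemma bsNo2x2 (hn : 0 < n) (ha : a ∈ Λ.S) (han : a + n ∉ Λ.S)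
    (key : ∀ t : ℤ, t ∈ Λ'.S ↔ (t ∈ Λ.S ∧ t ≠ a) ∨ t = a + n) :
    No2x2 (Λ'.cells \ Λ.cells) := by
  rintro ⟨r, s, h1, _, _, h4⟩
  rw [bsMem_diff_iff hn ha han key] at h1 h4
  dsimp only at h1 h4
  have e1 : (((s:ℕ) + 1 : ℕ) : ℤ) - (((r:ℕ) + 1 : ℕ) : ℤ) = (s:ℤ) - r := by push_cast; ring
  rw [e1] at h4
  omega

lemma bsNcardD (hn : 0 < n) (ha : a ∈ Λ.S) (han : a + n ∉ Λ.S)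
    (key : ∀ t : ℤ, t ∈ Λ'.S ↔ (t ∈ Λ.S ∧ t ≠ a) ∨ t = a + n) :
    (Λ'.cells \ Λ.cells).ncard = n ∧ (Λ'.cells \ Λ.cells).Finite := by
  have hD : Λ'.cells \ Λ.cells = ↑((Finset.Icc (a+1) (a+(n:ℤ))).image (bsBx Λ)) := by
    ext x
    simp only [Finset.coe_image, Set.mem_image, Finset.mem_coe, Finset.mem_Icc,
      bsMem_diff_iff_bx hn ha han key]
    constructor
    · rintro ⟨d, h1, h2, rfl⟩
      exact ⟨d, ⟨by omega, h2⟩, rfl⟩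
    · rintro ⟨d, ⟨h1, h2⟩, rfl⟩
      exact ⟨d, by omega, h2, rfl⟩
  constructor
  · rw [hD, Set.ncard_coe_finset, Finset.card_image_of_injOn, Int.card_Icc]
    · omega
    · intro d1 _ d2 _ he
      rw [← bsBx_diag Λ d1, he, bsBx_diag]
  · rw [hD]
    exact Finset.finite_toSet _

lemma bsColors (hn : 0 < n) (ha : a ∈ Λ.S) (han : a + n ∉ Λ.S)
    (key : ∀ t : ℤ, t ∈ Λ'.S ↔ (t ∈ Λ.S ∧ t ≠ a) ∨ t = a + n) (c : ℕ) (hc : c < n) :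
    ∃! x : ℕ × ℕ, x ∈ Λ'.cells \ Λ.cells ∧ ((x.2 : ℤ) - (x.1 : ℤ)).emod n = c := by
  have hn' : (0:ℤ) < n := by exact_mod_cast hn
  set d : ℤ := a + 1 + ((c:ℤ) - (a+1)) % n with hd
  have h1 : 0 ≤ ((c:ℤ) - (a+1)) % n := Int.emod_nonneg _ (by omega)
  have h2 : ((c:ℤ) - (a+1)) % n < n := Int.emod_lt_of_pos _ hn'
  have hdm : d % (n:ℤ) = c := by
    rw [hd, add_comm (a+1) _, Int.emod_add_emod, show (c:ℤ) - (a+1) + (a+1) = (c:ℤ) by ring,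
      Int.emod_eq_of_lt (Int.natCast_nonneg c) (by exact_mod_cast hc)]
  refine ⟨bsBx Λ d,
    ⟨(bsMem_diff_iff_bx hn ha han key _).mpr ⟨d, by omega, by omega, rfl⟩,
      by rw [bsBx_diag]; exact hdm⟩, ?_⟩
  rintro y ⟨hy, hyc⟩
  obtain ⟨e, he1, he2, rfl⟩ := (bsMem_diff_iff_bx hn ha han key y).mp hy
  rw [bsBx_diag] at hyc
  have hyc' : e % (n:ℤ) = (c:ℤ) := hyc
  have hmeq : d % (n:ℤ) = e % (n:ℤ) := by rw [hdm, hyc']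
  have hdvd : (n:ℤ) ∣ e - d := Int.ModEq.dvd hmeq
  obtain ⟨m, hm⟩ := hdvd
  have hm0 : m = 0 := by
    rcases lt_trichotomy m 0 with h | h | h
    · nlinarith
    · exact h
    · nlinarith
  have : e = d := by
    rw [hm0, mul_zero] at hm
    omega
  rw [this]

end BSStrip

/-- adding a single box in position `(i,j)` to the component `λ_k` of the
`n`-quotient corresponds to adding a border strip of length `n` to `Λ`; the strip has
exactly one box of each color, its northeastern-most box has color `k`, and its unique
color-0 box lies on the diagonal `s - r = n(j - i)`. -/
theorem add_box_is_border_strip (n k i j : ℕ) (hn : 0 < n) (hk : k < n)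
    (lam lam' : ℕ → Ptn) (Λ Λ' : Ptn)
    (hq : SlopeQuot n lam Λ) (hq' : SlopeQuot n lam' Λ')
    (hbox : (lam k).f i = j) (hbox' : (lam' k).f i = j + 1)
    (hrow : ∀ r : ℕ, r ≠ i → (lam' k).f r = (lam k).f r)
    (hcomp : ∀ l : ℕ, l ≠ k → lam' l = lam l) :
    IsBorderStrip n (Λ'.cells \ Λ.cells) ∧
    (∀ c : ℕ, c < n → ∃! x : ℕ × ℕ, x ∈ Λ'.cells \ Λ.cells ∧
        ((x.2 : ℤ) - (x.1 : ℤ)).emod n = c) ∧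
    (∃ x ∈ Λ'.cells \ Λ.cells,
        (∀ y ∈ Λ'.cells \ Λ.cells, x.1 ≤ y.1 ∧ y.2 ≤ x.2) ∧
        ((x.2 : ℤ) - (x.1 : ℤ)).emod n = k) ∧
    (∃ x ∈ Λ'.cells \ Λ.cells,
        (x.2 : ℤ) - (x.1 : ℤ) = n * ((j : ℤ) - (i : ℤ))) := by
  have hnz : ((n:ℤ)) ≠ 0 := by exact_mod_cast hn.ne'
  have hnp : (0:ℤ) < n := by exact_mod_cast hn
  have hq2 : ∀ t : ℤ, t ∈ Λ.S ↔ t / (n:ℤ) ∈ (lam (t % (n:ℤ)).toNat).S := hq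
  have hq2' : ∀ t : ℤ, t ∈ Λ'.S ↔ t / (n:ℤ) ∈ (lam' (t % (n:ℤ)).toNat).S := hq'
  set m₀ : ℤ := (j:ℤ) - (i:ℤ) - 1 with hm₀
  -- beta facts for the k-th component
  have hβi : bsBeta (lam k) i = m₀ := by
    simp only [bsBeta, hbox, hm₀]
    ring
  have hβi' : bsBeta (lam' k) i = m₀ + 1 := by
    simp only [bsBeta, hbox', hm₀]
    push_cast
    ring
  have hβ' : ∀ r : ℕ, r ≠ i → bsBeta (lam' k) r = bsBeta (lam k) r := by
    intro r hr
    simp only [bsBeta, hrow r hr]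
  have hm1 : (m₀ + 1) ∉ (lam k).S := by
    rw [bsMem_S_iff]
    rintro ⟨r, hr⟩
    rcases lt_trichotomy r i with h | h | h
    · have hi : 1 ≤ i := by omega
      have h2 : j + 1 ≤ (lam' k).f (i-1) := by
        have h3 := (lam' k).anti (i-1)
        rwa [show i - 1 + 1 = i by omega, hbox'] at h3
      have h1 : j + 1 ≤ (lam k).f (i-1) := by
        rw [← hrow (i-1) (by omega)]
        exact h2
      have h3 : bsBeta (lam k) (i-1) ≤ bsBeta (lam k) r :=
        (bsBeta_strictAnti (lam k)).antitone (by omega)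
      have h4 : m₀ + 2 ≤ bsBeta (lam k) (i-1) := by
        simp only [bsBeta, hm₀]
        omega
      omega
    · subst h
      rw [hβi] at hr
      omega
    · have h5 := bsBeta_strictAnti (lam k) h
      rw [hβi] at h5
      omega
  have hSk' : ∀ m : ℤ, m ∈ (lam' k).S ↔ ((m ∈ (lam k).S ∧ m ≠ m₀) ∨ m = m₀ + 1) := by
    intro m
    rw [bsMem_S_iff, bsMem_S_iff]
    constructor
    · rintro ⟨r, rfl⟩
      by_cases hri : r = i
      · subst hri
        right
        rw [hβi']
      · left
        rw [hβ' r hri]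
        refine ⟨⟨r, rfl⟩, fun h => hri ?_⟩
        exact (bsBeta_strictAnti (lam k)).injective (h.trans hβi.symm)
    · rintro (⟨⟨r, rfl⟩, hne⟩ | rfl)
      · have hri : r ≠ i := fun h => hne (by rw [h, hβi])
        exact ⟨r, (hβ' r hri).symm⟩
      · exact ⟨i, hβi'.symm⟩
  -- ediv/emod helper
  have hmk : ∀ m : ℤ, ((n:ℤ) * m + k) % (n:ℤ) = (k:ℤ) ∧ ((n:ℤ) * m + k) / (n:ℤ) = m := by
    intro m
    have hk0 : (0:ℤ) ≤ k := Int.natCast_nonneg k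
    have hkn : (k:ℤ) < n := by exact_mod_cast hk
    constructor
    · rw [add_comm, Int.add_mul_emod_self_left]
      exact Int.emod_eq_of_lt hk0 hkn
    · rw [add_comm, Int.add_mul_ediv_left _ _ hnz, Int.ediv_eq_zero_of_lt hk0 hkn, zero_add]
  set a : ℤ := (n:ℤ) * m₀ + k with hadef
  have haN : a + (n:ℤ) = (n:ℤ) * (m₀ + 1) + k := by rw [hadef]; ring
  have ha : a ∈ Λ.S := by
    rw [hadef, hq2, (hmk m₀).1, (hmk m₀).2, Int.toNat_natCast]
    exact ⟨i, hβi.symm⟩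
  have han : a + (n:ℤ) ∉ Λ.S := by
    rw [haN, hq2, (hmk (m₀+1)).1, (hmk (m₀+1)).2, Int.toNat_natCast]
    exact hm1
  have key : ∀ t : ℤ, t ∈ Λ'.S ↔ (t ∈ Λ.S ∧ t ≠ a) ∨ t = a + n := by
    intro t
    have hdecomp : (n:ℤ) * (t / n) + t % n = t := Int.mul_ediv_add_emod t n
    have hem0 : 0 ≤ t % (n:ℤ) := Int.emod_nonneg t hnz
    have hemn : t % (n:ℤ) < n := Int.emod_lt_of_pos t hnp
    rw [hq2', hq2]
    by_cases hck : (t % (n:ℤ)).toNat = k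
    · rw [hck]
      have hkt : t % (n:ℤ) = (k:ℤ) := by omega
      rw [hSk' (t / (n:ℤ))]
      constructor
      · rintro (⟨hm, hne⟩ | he)
        · left
          refine ⟨hm, fun h => hne ?_⟩
          rw [hadef] at h
          rw [h]
          exact (hmk m₀).2
        · right
          rw [haN]
          calc t = (n:ℤ) * (t / n) + t % n := hdecomp.symm
            _ = (n:ℤ) * (m₀ + 1) + k := by rw [he, hkt]
      · rintro (⟨hm, hne⟩ | he)
        · left
          refine ⟨hm, fun h => hne ?_⟩
          rw [hadef]
          calc t = (n:ℤ) * (t / n) + t % n := hdecomp.symm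
            _ = (n:ℤ) * m₀ + k := by rw [h, hkt]
        · right
          rw [haN] at he
          rw [he]
          exact (hmk (m₀+1)).2
    · rw [hcomp _ hck]
      have h1 : t ≠ a := by
        intro h
        apply hck
        rw [h, hadef, (hmk m₀).1, Int.toNat_natCast]
      have h2 : t ≠ a + n := by
        intro h
        apply hck
        rw [h, haN, (hmk (m₀+1)).1, Int.toNat_natCast]
      tauto
  -- assemble
  obtain ⟨hcard, hfin⟩ := bsNcardD hn ha han key
  refine ⟨⟨hfin, hcard, bsConnected hn ha han key, bsNo2x2 hn ha han key⟩,
    fun c hc => bsColors hn ha han key c hc, ?_, ?_⟩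
  · -- northeast box
    refine ⟨bsBx Λ (a + n),
      (bsMem_diff_iff_bx hn ha han key _).mpr ⟨a + n, by omega, le_refl _, rfl⟩, ?_, ?_⟩
    · intro y hy
      obtain ⟨d, hd1, hd2, rfl⟩ := (bsMem_diff_iff_bx hn ha han key y).mp hy
      constructor
      · exact bsNv_antitone Λ hd2
      · exact Int.toNat_le_toNat (bsG_mono Λ hd2)
    · rw [bsBx_diag]
      show (a + (n:ℤ)) % n = k
      rw [haN, add_comm, Int.add_mul_emod_self_left]
      exact Int.emod_eq_of_lt (Int.natCast_nonneg k) (by exact_mod_cast hk)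
  · -- color 0 box on diagonal n*(j-i)
    have hji : (n:ℤ) * ((j:ℤ) - (i:ℤ)) = (n:ℤ) * (m₀ + 1) := by
      rw [hm₀]
      ring
    have hkk : (k:ℤ) < n := by exact_mod_cast hk
    refine ⟨bsBx Λ ((n:ℤ) * ((j:ℤ) - (i:ℤ))),
      (bsMem_diff_iff_bx hn ha han key _).mpr
        ⟨(n:ℤ) * ((j:ℤ) - (i:ℤ)), ?_, ?_, rfl⟩, bsBx_diag _ _⟩
    · rw [hji, hadef]
      have : (n:ℤ) * (m₀ + 1) = n * m₀ + n := by ring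
      rw [this]
      omega
    · rw [hji, haN]
      have : (n:ℤ) * (m₀ + 1) = n * m₀ + n := by ring
      omega
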